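/- Let (X(t))_{t≥0} be a discrete-time Markov chain on a state space X, Φ : X → ℝ_{≥0}, and suppose there exist K, γ, δ > 0 and a time t₀ such that (i) for all x with Φ(x) > K, E_x[max{−δ, Φ(X(t₀)) − Φ(x)}] ≤ −γ, and (ii) there exists θ > 0 with θ·L₃(δ,θ,t₀) ≤ γ, where L₃(δ,θ,t₀) = sup_x E_x[(max{−δ, Φ(X(t₀))−Φ(x)})² · exp(θ(Φ(X(t₀))−Φ(x))⁺)]. Then for all x with Φ(x) > K, E_x[exp(θ(Φ(X(t₀)) − Φ(x)))] ≤ 1 − γθ/2; i.e., exp(θΦ(·)) is a geometric Lyapunov function with geometric drift size 1 − γθ/2, drift time t₀, and exception parameter e^{θK}. -/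

import Mathlib

open MeasureTheory

private lemma exp_le_quad_of_nonpos {t : ℝ} (ht : t ≤ 0) :
    Real.exp t ≤ 1 + t + t ^ 2 / 2 := by
  have hF : 1 + (-t) + (-t) ^ 2 / 2 ≤ Real.exp (-t) := by
    have := Real.sum_le_exp_of_nonneg (x := -t) (by linarith) 3
    simpa [Finset.sum_range_succ, Nat.factorial] using this
  have hEF : Real.exp t * Real.exp (-t) = 1 := by
    rw [← Real.exp_add]; simp
  have hE : 0 < Real.exp t := Real.exp_pos t
  have hEQ : Real.exp t * (1 - t + t ^ 2 / 2) ≤ 1 := by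
    calc Real.exp t * (1 - t + t ^ 2 / 2)
        ≤ Real.exp t * Real.exp (-t) := by
          apply mul_le_mul_of_nonneg_left _ hE.le
          nlinarith [hF]
      _ = 1 := hEF
  nlinarith [sq_nonneg t, sq_nonneg (t * t), hEQ, hE]

private lemma exp_le_quad_of_nonneg {t : ℝ} (ht : 0 ≤ t) :
    Real.exp t ≤ 1 + t + t ^ 2 / 2 * Real.exp t := by
  set f : ℝ → ℝ := fun t => 1 + t + t ^ 2 / 2 * Real.exp t - Real.exp t with hf
  have hder : ∀ s : ℝ, HasDerivAt f
      (1 + (s * Real.exp s + s ^ 2 / 2 * Real.exp s) - Real.exp s) s := by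
    intro s
    have h1 : HasDerivAt (fun u : ℝ => u ^ 2 / 2) s s := by
      simpa using (hasDerivAt_pow 2 s).div_const 2
    have h2 := Real.hasDerivAt_exp s
    have h3 := h1.mul h2
    have h4 : HasDerivAt (fun u : ℝ => 1 + u) 1 s := (hasDerivAt_id s).const_add 1
    exact (h4.add h3).sub h2
  have hderiv_nonneg : ∀ s : ℝ, 0 ≤ s →
      0 ≤ 1 + (s * Real.exp s + s ^ 2 / 2 * Real.exp s) - Real.exp s := by
    intro s hs
    have h1 : 1 - s - s ^ 2 / 2 ≤ Real.exp (-s - s ^ 2 / 2) := by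
      have := Real.add_one_le_exp (-s - s ^ 2 / 2); linarith
    have h2 : Real.exp s * Real.exp (-s - s ^ 2 / 2) = Real.exp (-s ^ 2 / 2) := by
      rw [← Real.exp_add]; ring_nf
    have h3 : Real.exp (-s ^ 2 / 2) ≤ 1 := by
      rw [Real.exp_le_one_iff]; nlinarith [sq_nonneg s]
    have hE : (0:ℝ) < Real.exp s := Real.exp_pos s
    have h4 : Real.exp s * (1 - s - s ^ 2 / 2) ≤ 1 := by
      calc Real.exp s * (1 - s - s ^ 2 / 2)
          ≤ Real.exp s * Real.exp (-s - s ^ 2 / 2) :=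
            mul_le_mul_of_nonneg_left h1 hE.le
        _ = Real.exp (-s ^ 2 / 2) := h2
        _ ≤ 1 := h3
    nlinarith [h4]
  have hmono : MonotoneOn f (Set.Ici (0:ℝ)) := by
    refine monotoneOn_of_deriv_nonneg (convex_Ici 0)
      (fun s _ => ((hder s).continuousAt).continuousWithinAt)
      (fun s _ => (hder s).differentiableAt.differentiableWithinAt)
      (fun s hs => ?_)
    rw [(hder s).deriv]
    exact hderiv_nonneg s (le_of_lt (by simpa using hs))
  have h0 : f 0 ≤ f t := hmono (Set.self_mem_Ici) (by exact ht) ht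
  simp only [hf] at h0
  norm_num at h0
  linarith

private lemma exp_le_key (t : ℝ) :
    Real.exp t ≤ 1 + t + t ^ 2 / 2 * Real.exp (max t 0) := by
  rcases le_or_gt t 0 with h | h
  · rw [max_eq_right h, Real.exp_zero]
    simpa using exp_le_quad_of_nonpos h
  · rw [max_eq_left h.le]
    exact exp_le_quad_of_nonneg h.le

theorem stmt5 {X : Type*} [MeasurableSpace X]
    (μ : X → Measure X) (hprob : ∀ x, IsProbabilityMeasure (μ x))
    (Φ : X → ℝ) (hΦ : ∀ x, 0 ≤ Φ x)
    (K γ δ θ L3 : ℝ) (hK : 0 < K) (hγ : 0 < γ) (hδ : 0 < δ) (hθ : 0 < θ)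
    (hint1 : ∀ x, Integrable (fun y => max (-δ) (Φ y - Φ x)) (μ x))
    (hint2 : ∀ x, Integrable
      (fun y => (max (-δ) (Φ y - Φ x)) ^ 2 * Real.exp (θ * max (Φ y - Φ x) 0)) (μ x))
    (hint3 : ∀ x, Integrable (fun y => Real.exp (θ * (Φ y - Φ x))) (μ x))
    (hdrift : ∀ x, K < Φ x → ∫ y, max (-δ) (Φ y - Φ x) ∂(μ x) ≤ -γ)
    (hL3 : ∀ x, ∫ y, (max (-δ) (Φ y - Φ x)) ^ 2 * Real.exp (θ * max (Φ y - Φ x) 0) ∂(μ x) ≤ L3)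
    (hθL3 : θ * L3 ≤ γ) :
    ∀ x, K < Φ x → ∫ y, Real.exp (θ * (Φ y - Φ x)) ∂(μ x) ≤ 1 - γ * θ / 2 := by
  intro x hx
  haveI := hprob x
  set g : X → ℝ := fun y => 1 + θ * max (-δ) (Φ y - Φ x)
      + θ ^ 2 / 2 * ((max (-δ) (Φ y - Φ x)) ^ 2 * Real.exp (θ * max (Φ y - Φ x) 0)) with hg
  have hpt : ∀ y, Real.exp (θ * (Φ y - Φ x)) ≤ g y := by
    intro y
    set u := Φ y - Φ x with hu
    set m := max (-δ) u with hm
    have hum : u ≤ m := le_max_right _ _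
    have h1 : Real.exp (θ * u) ≤ Real.exp (θ * m) :=
      Real.exp_le_exp.mpr (by nlinarith)
    have hmax : max m 0 = max u 0 := by
      rcases le_total (-δ) u with h | h
      · rw [hm, max_eq_right h]
      · rw [hm, max_eq_left h]
        rw [max_eq_right (by linarith : (-δ:ℝ) ≤ 0), max_eq_right (by linarith : u ≤ 0)]
    have h2 := exp_le_key (θ * m)
    have h3 : max (θ * m) 0 = θ * max u 0 := by
      rw [← hmax, mul_max_of_nonneg m 0 hθ.le, mul_zero]
    rw [h3] at h2
    have : Real.exp (θ * u) ≤ 1 + θ * m + (θ * m) ^ 2 / 2 * Real.exp (θ * max u 0) :=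
      h1.trans h2
    have he : 0 < Real.exp (θ * max u 0) := Real.exp_pos _
    simp only [hg]
    nlinarith [this]
  have hig : Integrable g (μ x) := by
    exact (((integrable_const (1:ℝ)).add ((hint1 x).const_mul θ)).add
      ((hint2 x).const_mul (θ ^ 2 / 2)))
  have hmono : ∫ y, Real.exp (θ * (Φ y - Φ x)) ∂(μ x) ≤ ∫ y, g y ∂(μ x) :=
    integral_mono (hint3 x) hig hpt
  have hsplit : ∫ y, g y ∂(μ x)
      = 1 + θ * ∫ y, max (-δ) (Φ y - Φ x) ∂(μ x)
        + θ ^ 2 / 2 * ∫ y, (max (-δ) (Φ y - Φ x)) ^ 2 * Real.exp (θ * max (Φ y - Φ x) 0) ∂(μ x) := by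
    have i1 : Integrable (fun y => θ * max (-δ) (Φ y - Φ x)) (μ x) := (hint1 x).const_mul θ
    have i2 : Integrable (fun y => θ ^ 2 / 2 *
        ((max (-δ) (Φ y - Φ x)) ^ 2 * Real.exp (θ * max (Φ y - Φ x) 0))) (μ x) :=
      (hint2 x).const_mul _
    have i12 : Integrable (fun y => 1 + θ * max (-δ) (Φ y - Φ x)) (μ x) :=
      (integrable_const 1).add i1
    rw [hg, integral_add i12 i2, integral_add (integrable_const (1:ℝ)) i1,
      integral_const_mul, integral_const_mul]
    simp
  have hd := hdrift x hx
  have hl := hL3 x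
  have h1 : θ * ∫ y, max (-δ) (Φ y - Φ x) ∂(μ x) ≤ θ * (-γ) :=
    mul_le_mul_of_nonneg_left hd hθ.le
  have h2 : θ ^ 2 / 2 * ∫ y, (max (-δ) (Φ y - Φ x)) ^ 2 * Real.exp (θ * max (Φ y - Φ x) 0) ∂(μ x)
      ≤ θ ^ 2 / 2 * L3 := by
    apply mul_le_mul_of_nonneg_left hl (by positivity)
  calc ∫ y, Real.exp (θ * (Φ y - Φ x)) ∂(μ x) ≤ ∫ y, g y ∂(μ x) := hmono
    _ = _ := hsplit
    _ ≤ 1 + θ * (-γ) + θ ^ 2 / 2 * L3 := by linarith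
    _ ≤ 1 - γ * θ / 2 := by nlinarith [hθ.le]
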